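/- Let P be a stacked simplicial polytope boundary, i.e., a simplicial complex obtained from the boundary of an n-simplex (n ≥ 3) by a finite sequence of stellar subdivisions of facets. Then the 1-skeleton of P is a chordal graph. -/

import Mathlib

open Finset

def IsSimplicialComplex {α : Type*} (K : Set (Finset α)) : Prop :=
  ∅ ∈ K ∧ ∀ σ ∈ K, ∀ τ ⊆ σ, τ ∈ K

/-- The 1-skeleton graph of a simplicial complex. -/
def skeletonGraph {α : Type*} [DecidableEq α] (L : Set (Finset α)) :
    SimpleGraph α where
  Adj i j := i ≠ j ∧ ({i, j} : Finset α) ∈ L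
  symm := ⟨fun i j h => ⟨h.1.symm, by rw [Finset.pair_comm]; exact h.2⟩⟩
  loopless := ⟨fun i h => h.1 rfl⟩

/-- A simplicial complex is chordal if its 1-skeleton contains no induced
(chordless) cycle of length at least `4`. -/
def ChordalComplex {α : Type*} [DecidableEq α] (L : Set (Finset α)) : Prop :=
  ∀ n : ℕ, 4 ≤ n → ∀ f : ZMod n → α, Function.Injective f →
    ¬ (∀ i j : ZMod n,
        (skeletonGraph L).Adj (f i) (f j) ↔ (j = i + 1 ∨ i = j + 1))

/-- One stellar subdivision of a facet: `L'` is obtained from `L` by choosing a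
nonempty facet `σ` (a maximal face) and a new vertex `v`, removing `σ` and
adding the faces `{v} ∪ τ` for all proper subsets `τ ⊊ σ`. -/
def StellarStep {α : Type*} [DecidableEq α] (L L' : Set (Finset α)) : Prop :=
  ∃ (σ : Finset α) (v : α), σ ∈ L ∧ σ ≠ ∅ ∧ (∀ τ ∈ L, σ ⊆ τ → τ = σ) ∧
    ({v} : Finset α) ∉ L ∧
    L' = (L \ {σ}) ∪ {s | ∃ τ : Finset α, τ ⊆ σ ∧ τ ≠ σ ∧ s = insert v τ}

/-- The invariant we carry along stellar subdivisions: the complex is a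
simplicial complex, pure of facet-size `n`, and chordal. -/
def StackedInv {α : Type*} [DecidableEq α] (n : ℕ) (L : Set (Finset α)) : Prop :=
  IsSimplicialComplex L ∧ (∀ τ ∈ L, ∃ ρ ∈ L, τ ⊆ ρ ∧ ρ.card = n) ∧
    ChordalComplex L

lemma zmod_cast_ne_zero (m k : ℕ) (hk : 0 < k) (hkm : k < m) :
    ((k : ℕ) : ZMod m) ≠ 0 := by
  intro h
  rw [ZMod.natCast_eq_zero_iff] at h
  have := Nat.le_of_dvd hk h
  omega

lemma stacked_inv_step {α : Type*} [DecidableEq α] (n : ℕ) (hn : 3 ≤ n)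
    {L L' : Set (Finset α)} (hI : StackedInv n L) (hs : StellarStep L L') :
    StackedInv n L' := by
  obtain ⟨⟨hempty, hdown⟩, hpure, hchord⟩ := hI
  obtain ⟨σ, v, hσL, hσne, hmax, hvL, rfl⟩ := hs
  have hvface : ∀ s ∈ L, v ∉ s := fun s hs hv =>
    hvL (hdown s hs {v} (Finset.singleton_subset_iff.mpr hv))
  have hvσ : v ∉ σ := hvface σ hσL
  have hσcard : σ.card = n := by
    obtain ⟨ρ, hρL, hsub, hcard⟩ := hpure σ hσL
    rw [← hcard, hmax ρ hρL hsub]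
  have hmem : ∀ s : Finset α,
      s ∈ (L \ {σ}) ∪ {s | ∃ τ : Finset α, τ ⊆ σ ∧ τ ≠ σ ∧ s = insert v τ} ↔
      (s ∈ L ∧ s ≠ σ) ∨ ∃ τ : Finset α, τ ⊆ σ ∧ τ ≠ σ ∧ s = insert v τ := by
    intro s
    simp [Set.mem_diff, Set.mem_setOf_eq, Set.mem_union]
  -- small subsets of σ stay
  have hsmall : ∀ s : Finset α, s ⊆ σ → s.card < n →
      s ∈ (L \ {σ}) ∪ {s | ∃ τ : Finset α, τ ⊆ σ ∧ τ ≠ σ ∧ s = insert v τ} := by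
    intro s hsσ hcard
    refine (hmem s).mpr (Or.inl ⟨hdown σ hσL s hsσ, ?_⟩)
    intro h; rw [h] at hcard; omega
  -- edges containing v
  have hedgev : ∀ x : α, x ≠ v →
      (({v, x} : Finset α) ∈ (L \ {σ}) ∪
        {s | ∃ τ : Finset α, τ ⊆ σ ∧ τ ≠ σ ∧ s = insert v τ} ↔ x ∈ σ) := by
    intro x hx
    rw [hmem]
    constructor
    · rintro (⟨hL, -⟩ | ⟨τ, hτσ, -, hτ⟩)
      · exact absurd (hvface _ hL) (by simp)
      · have : x ∈ insert v τ := by rw [← hτ]; simp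
        rcases Finset.mem_insert.mp this with h | h
        · exact absurd h hx
        · exact hτσ h
    · intro hxσ
      refine Or.inr ⟨{x}, Finset.singleton_subset_iff.mpr hxσ, ?_, rfl⟩
      intro h
      have : ({x} : Finset α).card = n := by rw [h, hσcard]
      simp at this; omega
  -- edges avoiding v
  have hedgenov : ∀ s : Finset α, v ∉ s → s.card ≤ 2 →
      (s ∈ (L \ {σ}) ∪ {s | ∃ τ : Finset α, τ ⊆ σ ∧ τ ≠ σ ∧ s = insert v τ} ↔
        s ∈ L) := by
    intro s hvs hc
    rw [hmem]
    constructor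
    · rintro (⟨hL, -⟩ | ⟨τ, -, -, hτ⟩)
      · exact hL
      · exact absurd (by rw [hτ]; simp : v ∈ s) hvs
    · intro hL
      refine Or.inl ⟨hL, fun h => ?_⟩
      rw [h, hσcard] at hc; omega
  refine ⟨⟨?_, ?_⟩, ?_, ?_⟩
  · -- empty set
    exact (hmem ∅).mpr (Or.inl ⟨hempty, fun h => hσne h.symm⟩)
  · -- downward closed
    intro s hsL' t hts
    rcases (hmem s).mp hsL' with ⟨hsL, hsne⟩ | ⟨τ, hτσ, hτne, rfl⟩
    · refine (hmem t).mpr (Or.inl ⟨hdown s hsL t hts, fun h => ?_⟩)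
      exact hsne (hmax s hsL (h ▸ hts))
    · by_cases hvt : v ∈ t
      · refine (hmem t).mpr (Or.inr ⟨t.erase v, ?_, ?_, (Finset.insert_erase hvt).symm⟩)
        · intro x hx
          have hxτ : x ∈ insert v τ := hts (Finset.mem_of_mem_erase hx)
          rcases Finset.mem_insert.mp hxτ with h | h
          · exact absurd (h ▸ hx) (Finset.notMem_erase v t)
          · exact hτσ h
        · intro h
          have : σ ⊆ τ := by
            intro x hx
            have hxt : x ∈ t.erase v := h ▸ hx
            have hxτ : x ∈ insert v τ := hts (Finset.mem_of_mem_erase hxt)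
            rcases Finset.mem_insert.mp hxτ with h' | h'
            · exact absurd (h' ▸ hx) hvσ
            · exact h'
          exact hτne (Finset.Subset.antisymm hτσ this)
      · have htτ : t ⊆ τ := fun x hx => by
          rcases Finset.mem_insert.mp (hts hx) with h | h
          · exact absurd (h ▸ hx) hvt
          · exact h
        refine (hmem t).mpr (Or.inl ⟨hdown σ hσL t (htτ.trans hτσ), fun h => hτne ?_⟩)
        exact Finset.Subset.antisymm hτσ (h ▸ htτ)
  · -- purity
    intro s hsL'
    rcases (hmem s).mp hsL' with ⟨hsL, hsne⟩ | ⟨τ, hτσ, hτne, rfl⟩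
    · obtain ⟨ρ, hρL, hsub, hcard⟩ := hpure s hsL
      by_cases hρσ : ρ = σ
      · -- s ⊊ σ; fatten inside σ and add v
        have hssσ : s ⊆ σ := hρσ ▸ hsub
        have hscard : s.card < n := by
          rw [← hσcard]
          exact Finset.card_lt_card (Finset.ssubset_iff_subset_ne.mpr ⟨hssσ, hsne⟩)
        obtain ⟨u, hsu, huσ, hucard⟩ :=
          Finset.exists_subsuperset_card_eq hssσ (by omega : s.card ≤ n - 1)
            (by omega : n - 1 ≤ σ.card)
        have hune : u ≠ σ := fun h => by rw [h, hσcard] at hucard; omega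
        refine ⟨insert v u, (hmem _).mpr (Or.inr ⟨u, huσ, hune, rfl⟩),
          hsu.trans (Finset.subset_insert v u), ?_⟩
        rw [Finset.card_insert_of_notMem (fun h => hvσ (huσ h)), hucard]
        omega
      · exact ⟨ρ, (hmem ρ).mpr (Or.inl ⟨hρL, hρσ⟩), hsub, hcard⟩
    · have hτcard : τ.card < n := by
        rw [← hσcard]
        exact Finset.card_lt_card (Finset.ssubset_iff_subset_ne.mpr ⟨hτσ, hτne⟩)
      obtain ⟨u, hτu, huσ, hucard⟩ :=
        Finset.exists_subsuperset_card_eq hτσ (by omega : τ.card ≤ n - 1)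
          (by omega : n - 1 ≤ σ.card)
      have hune : u ≠ σ := fun h => by rw [h, hσcard] at hucard; omega
      refine ⟨insert v u, (hmem _).mpr (Or.inr ⟨u, huσ, hune, rfl⟩),
        Finset.insert_subset_insert v hτu, ?_⟩
      rw [Finset.card_insert_of_notMem (fun h => hvσ (huσ h)), hucard]
      omega
  · -- chordality
    intro m hm f hf hcyc
    by_cases hv : ∃ i : ZMod m, f i = v
    · obtain ⟨i0, hi0⟩ := hv
      -- neighbours of v on the cycle
      have hadj1 : (skeletonGraph _).Adj (f i0) (f (i0 + 1)) :=
        (hcyc i0 (i0 + 1)).mpr (Or.inl rfl)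
      have hadj0 : (skeletonGraph _).Adj (f (i0 - 1)) (f i0) :=
        (hcyc (i0 - 1) i0).mpr (Or.inl (by ring))
      set a := f (i0 - 1)
      set b := f (i0 + 1)
      have hbv : b ≠ v := fun h => hadj1.1 (hi0.trans h.symm)
      have hav : a ≠ v := fun h => hadj0.1 (h.trans hi0.symm)
      have hbσ : b ∈ σ := (hedgev b hbv).mp (hi0 ▸ hadj1.2)
      have haσ : a ∈ σ := by
        have h' := hadj0.2
        rw [hi0, Finset.pair_comm] at h'
        exact (hedgev a hav).mp h'
      have hab : a ≠ b := by
        intro h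
        have h12 : (i0 - 1 : ZMod m) = i0 + 1 := hf h
        have h2 : ((2 : ℕ) : ZMod m) = 0 := by
          push_cast
          linear_combination - h12
        exact zmod_cast_ne_zero m 2 (by omega) (by omega) h2
      have hedge : ({a, b} : Finset α) ∈ (L \ {σ}) ∪
          {s | ∃ τ : Finset α, τ ⊆ σ ∧ τ ≠ σ ∧ s = insert v τ} := by
        apply hsmall
        · intro x hx
          rcases Finset.mem_insert.mp hx with h | h
          · exact h ▸ haσ
          · exact (Finset.mem_singleton.mp h) ▸ hbσ
        · calc ({a, b} : Finset α).card ≤ 2 := Finset.card_insert_le _ _ |>.trans (by simp)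
            _ < n := by omega
      have := (hcyc (i0 - 1) (i0 + 1)).mp ⟨hab, hedge⟩
      rcases this with h | h
      · have h1 : ((1 : ℕ) : ZMod m) = 0 := by
          push_cast
          linear_combination h
        exact zmod_cast_ne_zero m 1 (by omega) (by omega) h1
      · have h3 : ((3 : ℕ) : ZMod m) = 0 := by
          push_cast
          linear_combination - h
        exact zmod_cast_ne_zero m 3 (by omega) (by omega) h3
    · -- cycle avoids v: transfer to L
      push_neg at hv
      refine hchord m hm f hf fun i j => ?_
      rw [← hcyc i j]
      have hpair : ∀ i j : ZMod m, v ∉ ({f i, f j} : Finset α) := by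
        intro i j h
        rcases Finset.mem_insert.mp h with h | h
        · exact hv i h.symm
        · exact hv j (Finset.mem_singleton.mp h).symm
      have hcardle : ({f i, f j} : Finset α).card ≤ 2 :=
        Finset.card_insert_le _ _ |>.trans (by simp)
      constructor
      · rintro ⟨hne, hmem'⟩
        exact ⟨hne, (hedgenov _ (hpair i j) hcardle).mpr hmem'⟩
      · rintro ⟨hne, hmem'⟩
        exact ⟨hne, (hedgenov _ (hpair i j) hcardle).mp hmem'⟩

lemma stacked_inv_base {α : Type*} [DecidableEq α] (n : ℕ) (hn : 3 ≤ n)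
    (W : Finset α) (hW : W.card = n + 1) :
    StackedInv n {σ : Finset α | σ ⊆ W ∧ σ ≠ W} := by
  have hWne : ∀ s : Finset α, s.card ≤ n → s ≠ W := by
    intro s hs h; rw [h, hW] at hs; omega
  refine ⟨⟨⟨Finset.empty_subset W, hWne ∅ (by simp)⟩, ?_⟩, ?_, ?_⟩
  · rintro s ⟨hsW, hsne⟩ t hts
    exact ⟨hts.trans hsW, fun h => hsne (Finset.Subset.antisymm hsW (h ▸ hts))⟩
  · rintro s ⟨hsW, hsne⟩
    have hscard : s.card < n + 1 := by
      rw [← hW]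
      exact Finset.card_lt_card (Finset.ssubset_iff_subset_ne.mpr ⟨hsW, hsne⟩)
    obtain ⟨u, hsu, huW, hucard⟩ :=
      Finset.exists_subsuperset_card_eq hsW (by omega : s.card ≤ n)
        (by omega : n ≤ W.card)
    exact ⟨u, ⟨huW, hWne u (le_of_eq hucard)⟩, hsu, hucard⟩
  · intro m hm f hf hcyc
    have hadj01 : (skeletonGraph _).Adj (f 0) (f 1) :=
      (hcyc 0 1).mpr (Or.inl (by ring))
    have hadj12 : (skeletonGraph _).Adj (f 1) (f 2) :=
      (hcyc 1 2).mpr (Or.inl (by ring))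
    have h0W : f 0 ∈ W := hadj01.2.1 (Finset.mem_insert_self _ _)
    have h2W : f 2 ∈ W := hadj12.2.1 (Finset.mem_insert_of_mem (Finset.mem_singleton_self _))
    have h02 : f 0 ≠ f 2 := by
      intro h
      have := hf h
      have h2 : ((2 : ℕ) : ZMod m) = 0 := by push_cast; linear_combination - this
      exact zmod_cast_ne_zero m 2 (by omega) (by omega) h2
    have hadj02 : (skeletonGraph {σ : Finset α | σ ⊆ W ∧ σ ≠ W}).Adj (f 0) (f 2) := by
      refine ⟨h02, ⟨?_, ?_⟩⟩
      · intro x hx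
        rcases Finset.mem_insert.mp hx with h | h
        · exact h ▸ h0W
        · exact (Finset.mem_singleton.mp h) ▸ h2W
      · refine fun h => ?_
        have : ({f 0, f 2} : Finset α).card ≤ 2 :=
          Finset.card_insert_le _ _ |>.trans (by simp)
        rw [h, hW] at this; omega
    rcases (hcyc 0 2).mp hadj02 with h | h
    · have h1 : ((1 : ℕ) : ZMod m) = 0 := by push_cast; linear_combination h
      exact zmod_cast_ne_zero m 1 (by omega) (by omega) h1
    · have h3 : ((3 : ℕ) : ZMod m) = 0 := by push_cast; linear_combination - h
      exact zmod_cast_ne_zero m 3 (by omega) (by omega) h3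

/-- every complex obtained from the boundary of an `n`-simplex
(`n ≥ 3`) by a finite sequence of stellar subdivisions of facets (i.e. the
boundary of a stacked polytope) is chordal. -/
theorem stacked_is_chordal {α : Type*} [DecidableEq α] (n : ℕ) (hn : 3 ≤ n)
    (W : Finset α) (hW : W.card = n + 1)
    (P : Set (Finset α))
    (h : Relation.ReflTransGen StellarStep
      {σ : Finset α | σ ⊆ W ∧ σ ≠ W} P) :
    ChordalComplex P := by
  have key : StackedInv n P := by
    induction h with
    | refl => exact stacked_inv_base n hn W hW
    | tail _ hstep ih => exact stacked_inv_step n hn ih hstep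
  exact key.2.2
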